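/- Discrete Poincaré inequality: there exists a constant C₃ > 0 depending only on L_x and L_y (not on h, m, n) such that for every periodic grid function φ, ‖φ − φ̄‖₂ ≤ C₃·‖∇_hφ‖₂, where φ̄ denotes the constant grid function equal to the mean value (1/(m·n)) Σ_{i,j} φ(i,j). -/

import Mathlib

open Finset

noncomputable section

/-- Periodic grid functions on an `m × n` grid (indices taken modulo `m` and `n`). -/
abbrev Grid (m n : ℕ) := ZMod m × ZMod n → ℝ

/-- Forward difference in the `x` direction. -/
def Dx {m n : ℕ} (h : ℝ) (φ : Grid m n) : Grid m n :=
  fun p => (φ (p.1 + 1, p.2) - φ p) / h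

/-- Forward difference in the `y` direction. -/
def Dy {m n : ℕ} (h : ℝ) (φ : Grid m n) : Grid m n :=
  fun p => (φ (p.1, p.2 + 1) - φ p) / h

/-- Discrete `L²` norm. -/
def norm2 {m n : ℕ} [NeZero m] [NeZero n] (h : ℝ) (φ : Grid m n) : ℝ :=
  Real.sqrt (h ^ 2 * ∑ p : ZMod m × ZMod n, φ p ^ 2)

/-- Discrete `L²` norm of the gradient. -/
def gradNorm2 {m n : ℕ} [NeZero m] [NeZero n] (h : ℝ) (φ : Grid m n) : ℝ :=
  Real.sqrt (h ^ 2 * ∑ p : ZMod m × ZMod n, (Dx h φ p ^ 2 + Dy h φ p ^ 2))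

/-- Summing a function of `(l : ZMod n)` over `l ∈ range n` is summing over `ZMod n`. -/
lemma sum_range_zmod {n : ℕ} [NeZero n] (f : ZMod n → ℝ) :
    ∑ l ∈ Finset.range n, f (l : ZMod n) = ∑ y : ZMod n, f y := by
  refine Finset.sum_nbij' (i := fun l => (l : ZMod n)) (j := fun y => y.val) ?_ ?_ ?_ ?_ ?_
  · intro a _; exact Finset.mem_univ _
  · intro y _; exact Finset.mem_range.2 (ZMod.val_lt y)
  · intro a ha; exact ZMod.val_cast_of_lt (Finset.mem_range.1 ha)
  · intro y _; exact ZMod.natCast_rightInverse y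
  · intro a _; rfl

/-- Telescoping identity on `ZMod m`. -/
lemma tele {m : ℕ} (ψ : ZMod m → ℝ) (a : ZMod m) (s : ℕ) :
    ψ (a + (s : ZMod m)) - ψ a
      = ∑ k ∈ Finset.range s, (ψ (a + (k : ZMod m) + 1) - ψ (a + (k : ZMod m))) := by
  have h := Finset.sum_range_sub (f := fun k : ℕ => ψ (a + (k : ZMod m))) s
  simp only [Nat.cast_add, Nat.cast_one, Nat.cast_zero, add_zero] at h
  rw [← h]
  exact Finset.sum_congr rfl fun k _ => by rw [add_assoc]

set_option maxHeartbeats 1600000 in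
theorem discrete_poincare (Lx Ly : ℝ) (hLx : 0 < Lx) (hLy : 0 < Ly) :
    ∃ C₃ > (0 : ℝ), ∀ (m n : ℕ) [NeZero m] [NeZero n] (h : ℝ), 0 < h →
      (m : ℝ) * h = Lx → (n : ℝ) * h = Ly →
      ∀ φ : Grid m n,
        norm2 h (fun p => φ p - (∑ q : ZMod m × ZMod n, φ q) / ((m : ℝ) * (n : ℝ)))
          ≤ C₃ * gradNorm2 h φ := by
  refine ⟨Real.sqrt (2 * (Lx ^ 2 + Ly ^ 2)), Real.sqrt_pos.2 (by positivity), ?_⟩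
  intro m n _ _ h hh hmx hny φ
  have hm : (0 : ℝ) < m := by exact_mod_cast Nat.pos_of_ne_zero (NeZero.ne m)
  have hn : (0 : ℝ) < n := by exact_mod_cast Nat.pos_of_ne_zero (NeZero.ne n)
  set dX : Grid m n := fun q => φ (q.1 + 1, q.2) - φ q with hdXdef
  set dY : Grid m n := fun q => φ (q.1, q.2 + 1) - φ q with hdYdef
  set A : ZMod n → ℝ := fun y => ∑ x : ZMod m, |dX (x, y)| with hAdef
  set T : ℝ := ∑ q : ZMod m × ZMod n, |dY q| with hTdef
  set μ : ℝ := (∑ q : ZMod m × ZMod n, φ q) / ((m : ℝ) * (n : ℝ)) with hμdef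
  have hA0 : ∀ y, 0 ≤ A y := fun y => Finset.sum_nonneg fun x _ => abs_nonneg _
  have hT0 : 0 ≤ T := Finset.sum_nonneg fun q _ => abs_nonneg _
  have cardmn : (Fintype.card (ZMod m × ZMod n) : ℝ) = (m : ℝ) * n := by
    simp [Fintype.card_prod, ZMod.card]
  -- pointwise bound
  have key : ∀ p : ZMod m × ZMod n, |φ p - μ| ≤ A p.2 + T / m := by
    intro p
    have h1 : ((m : ℝ) * n) * (φ p - μ) = ∑ q : ZMod m × ZMod n, (φ p - φ (p + q)) := by
      rw [Finset.sum_sub_distrib, Finset.sum_const, Finset.card_univ]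
      have e : ∑ q : ZMod m × ZMod n, φ (p + q) = ∑ q : ZMod m × ZMod n, φ q :=
        Equiv.sum_comp (Equiv.addLeft p) φ
      rw [e, nsmul_eq_mul, hμdef]
      push_cast [Fintype.card_prod, ZMod.card]
      field_simp
    -- per-q bound
    have h2 : ∀ q : ZMod m × ZMod n, |φ p - φ (p + q)| ≤
        A p.2 + ∑ l ∈ Finset.range n, |dY (p.1 + q.1, p.2 + (l : ZMod n))| := by
      intro q
      have hq1 : ((q.1.val : ℕ) : ZMod m) = q.1 := ZMod.natCast_rightInverse q.1
      have hq2 : ((q.2.val : ℕ) : ZMod n) = q.2 := ZMod.natCast_rightInverse q.2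
      have hX := tele (fun x => φ (x, p.2)) p.1 q.1.val
      rw [hq1] at hX
      have hY := tele (fun y => φ (p.1 + q.1, y)) p.2 q.2.val
      rw [hq2] at hY
      have e : φ p - φ (p + q) =
          -((∑ l ∈ Finset.range q.2.val,
              (φ (p.1 + q.1, p.2 + (l : ZMod n) + 1) - φ (p.1 + q.1, p.2 + (l : ZMod n))))
            + (∑ k ∈ Finset.range q.1.val,
              (φ (p.1 + (k : ZMod m) + 1, p.2) - φ (p.1 + (k : ZMod m), p.2)))) := by
        have hp : φ p = φ (p.1, p.2) := by rw [Prod.mk.eta]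
        have hpq : φ (p + q) = φ (p.1 + q.1, p.2 + q.2) := rfl
        rw [hp, hpq, ← hY, ← hX]
        ring
      rw [e, abs_neg]
      have step1 : |(∑ l ∈ Finset.range q.2.val,
              (φ (p.1 + q.1, p.2 + (l : ZMod n) + 1) - φ (p.1 + q.1, p.2 + (l : ZMod n))))
            + (∑ k ∈ Finset.range q.1.val,
              (φ (p.1 + (k : ZMod m) + 1, p.2) - φ (p.1 + (k : ZMod m), p.2)))| ≤
          (∑ l ∈ Finset.range q.2.val, |dY (p.1 + q.1, p.2 + (l : ZMod n))|)
            + (∑ k ∈ Finset.range q.1.val, |dX (p.1 + (k : ZMod m), p.2)|) := by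
        refine (abs_add_le _ _).trans (add_le_add ?_ ?_)
        · exact Finset.abs_sum_le_sum_abs _ _
        · exact Finset.abs_sum_le_sum_abs _ _
      refine step1.trans ?_
      rw [add_comm]
      refine add_le_add ?_ ?_
      · -- extend x-range to m and identify with A p.2
        have hsub : ∑ k ∈ Finset.range q.1.val, |dX (p.1 + (k : ZMod m), p.2)| ≤
            ∑ k ∈ Finset.range m, |dX (p.1 + (k : ZMod m), p.2)| :=
          Finset.sum_le_sum_of_subset_of_nonneg
            (Finset.range_subset_range.2 (ZMod.val_lt q.1).le) (fun _ _ _ => abs_nonneg _)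
        refine hsub.trans (le_of_eq ?_)
        rw [sum_range_zmod (f := fun x => |dX (p.1 + x, p.2)|)]
        exact Equiv.sum_comp (Equiv.addLeft p.1) (fun x => |dX (x, p.2)|)
      · exact Finset.sum_le_sum_of_subset_of_nonneg
          (Finset.range_subset_range.2 (ZMod.val_lt q.2).le) (fun _ _ _ => abs_nonneg _)
    -- sum the per-q bound
    have h3 : ∑ q : ZMod m × ZMod n,
        (A p.2 + ∑ l ∈ Finset.range n, |dY (p.1 + q.1, p.2 + (l : ZMod n))|)
        = ((m : ℝ) * n) * A p.2 + (n : ℝ) * T := by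
      rw [Finset.sum_add_distrib, Finset.sum_const, Finset.card_univ, nsmul_eq_mul, cardmn]
      congr 1
      rw [Fintype.sum_prod_type]
      have e1 : ∀ x : ZMod m, ∑ y : ZMod n,
          (∑ l ∈ Finset.range n, |dY (p.1 + x, p.2 + (l : ZMod n))|)
          = (n : ℝ) * ∑ l ∈ Finset.range n, |dY (p.1 + x, p.2 + (l : ZMod n))| := by
        intro x
        rw [Finset.sum_const, Finset.card_univ, nsmul_eq_mul, ZMod.card]
      rw [Finset.sum_congr rfl fun x _ => e1 x, ← Finset.mul_sum]
      congr 1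
      rw [Finset.sum_comm]
      have e2 : ∀ l ∈ Finset.range n, ∑ x : ZMod m, |dY (p.1 + x, p.2 + (l : ZMod n))|
          = ∑ x : ZMod m, |dY (x, p.2 + (l : ZMod n))| := fun l _ =>
        Equiv.sum_comp (Equiv.addLeft p.1) (fun x => |dY (x, p.2 + (l : ZMod n))|)
      rw [Finset.sum_congr rfl e2,
        sum_range_zmod (f := fun y => ∑ x : ZMod m, |dY (x, p.2 + y)|)]
      have e3 : ∑ y : ZMod n, ∑ x : ZMod m, |dY (x, p.2 + y)|
          = ∑ y : ZMod n, ∑ x : ZMod m, |dY (x, y)| :=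
        Equiv.sum_comp (Equiv.addLeft p.2) (fun y => ∑ x : ZMod m, |dY (x, y)|)
      rw [e3, hTdef, Fintype.sum_prod_type, Finset.sum_comm]
    have h4 : ((m : ℝ) * n) * |φ p - μ| ≤ ((m : ℝ) * n) * A p.2 + (n : ℝ) * T := by
      calc ((m : ℝ) * n) * |φ p - μ| = |((m : ℝ) * n) * (φ p - μ)| := by
            rw [abs_mul, abs_of_pos (show (0:ℝ) < (m:ℝ)*(n:ℝ) by positivity)]
        _ = |∑ q : ZMod m × ZMod n, (φ p - φ (p + q))| := by rw [h1]
        _ ≤ ∑ q : ZMod m × ZMod n, |φ p - φ (p + q)| := Finset.abs_sum_le_sum_abs _ _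
        _ ≤ ∑ q : ZMod m × ZMod n,
            (A p.2 + ∑ l ∈ Finset.range n, |dY (p.1 + q.1, p.2 + (l : ZMod n))|) :=
            Finset.sum_le_sum fun q _ => h2 q
        _ = _ := h3
    have hmn : (0 : ℝ) < (m : ℝ) * n := by positivity
    have e4 : ((m : ℝ) * n) * (A p.2 + T / m) = ((m : ℝ) * n) * A p.2 + (n : ℝ) * T := by
      field_simp
    exact le_of_mul_le_mul_left (by rw [e4]; exact h4) hmn
  -- squared pointwise bound
  have sq_bound : ∀ p : ZMod m × ZMod n,
      (φ p - μ) ^ 2 ≤ 2 * (A p.2) ^ 2 + 2 * (T / m) ^ 2 := by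
    intro p
    have hk := key p
    have h0 : 0 ≤ A p.2 + T / m := by positivity
    nlinarith [sq_abs (φ p - μ), abs_nonneg (φ p - μ), sq_nonneg (A p.2 - T / m)]
  -- Cauchy–Schwarz bounds
  have hCSx : ∀ y : ZMod n, (A y) ^ 2 ≤ (m : ℝ) * ∑ x : ZMod m, (dX (x, y)) ^ 2 := by
    intro y
    have := sq_sum_le_card_mul_sum_sq (s := (Finset.univ : Finset (ZMod m)))
      (f := fun x => |dX (x, y)|)
    simpa [sq_abs, Finset.card_univ, ZMod.card] using this
  have hCSy : T ^ 2 ≤ ((m : ℝ) * n) * ∑ q : ZMod m × ZMod n, (dY q) ^ 2 := by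
    have := sq_sum_le_card_mul_sum_sq (s := (Finset.univ : Finset (ZMod m × ZMod n)))
      (f := fun q => |dY q|)
    simpa [sq_abs, Finset.card_univ, Fintype.card_prod, ZMod.card] using this
  -- sum of squares bound
  have Ssum : ∑ p : ZMod m × ZMod n, (φ p - μ) ^ 2 ≤
      2 * (m : ℝ) ^ 2 * ∑ q : ZMod m × ZMod n, (dX q) ^ 2
        + 2 * (n : ℝ) ^ 2 * ∑ q : ZMod m × ZMod n, (dY q) ^ 2 := by
    have step1 : ∑ p : ZMod m × ZMod n, (φ p - μ) ^ 2 ≤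
        ∑ p : ZMod m × ZMod n, (2 * (A p.2) ^ 2 + 2 * (T / m) ^ 2) :=
      Finset.sum_le_sum fun p _ => sq_bound p
    have step2 : ∑ p : ZMod m × ZMod n, (2 * (A p.2) ^ 2 + 2 * (T / m) ^ 2)
        = 2 * (m : ℝ) * (∑ y : ZMod n, (A y) ^ 2) + ((m : ℝ) * n) * (2 * (T / m) ^ 2) := by
      rw [Finset.sum_add_distrib, Finset.sum_const, Finset.card_univ, nsmul_eq_mul, cardmn]
      congr 1
      rw [Fintype.sum_prod_type]
      have e0 : (∑ x : ZMod m, ∑ y : ZMod n, 2 * (A (x, y).2) ^ 2)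
          = ∑ _x : ZMod m, ∑ y : ZMod n, 2 * (A y) ^ 2 := rfl
      rw [e0, Finset.sum_const, Finset.card_univ, ZMod.card, nsmul_eq_mul, ← Finset.mul_sum]
      ring
    have step3 : ∑ y : ZMod n, (A y) ^ 2 ≤ (m : ℝ) * ∑ q : ZMod m × ZMod n, (dX q) ^ 2 := by
      have e : ∑ y : ZMod n, ∑ x : ZMod m, (dX (x, y)) ^ 2
          = ∑ q : ZMod m × ZMod n, (dX q) ^ 2 := by
        rw [Fintype.sum_prod_type]; exact Finset.sum_comm
      calc ∑ y : ZMod n, (A y) ^ 2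
          ≤ ∑ y : ZMod n, (m : ℝ) * ∑ x : ZMod m, (dX (x, y)) ^ 2 :=
            Finset.sum_le_sum fun y _ => hCSx y
        _ = (m : ℝ) * ∑ q : ZMod m × ZMod n, (dX q) ^ 2 := by rw [← Finset.mul_sum, e]
    have hTm : ((m : ℝ) * n) * (2 * (T / m) ^ 2) ≤
        2 * (n : ℝ) ^ 2 * ∑ q : ZMod m × ZMod n, (dY q) ^ 2 := by
      have e : ((m : ℝ) * n) * (2 * (T / m) ^ 2) = 2 * (n : ℝ) / m * T ^ 2 := by
        field_simp
      rw [e]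
      calc 2 * (n : ℝ) / m * T ^ 2
          ≤ 2 * (n : ℝ) / m * (((m : ℝ) * n) * ∑ q : ZMod m × ZMod n, (dY q) ^ 2) := by
            apply mul_le_mul_of_nonneg_left hCSy (by positivity)
        _ = 2 * (n : ℝ) ^ 2 * ∑ q : ZMod m × ZMod n, (dY q) ^ 2 := by
            field_simp
    calc ∑ p : ZMod m × ZMod n, (φ p - μ) ^ 2
        ≤ 2 * (m : ℝ) * (∑ y : ZMod n, (A y) ^ 2) + ((m : ℝ) * n) * (2 * (T / m) ^ 2) := by
          rw [← step2]; exact step1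
      _ ≤ 2 * (m : ℝ) * ((m : ℝ) * ∑ q : ZMod m × ZMod n, (dX q) ^ 2)
            + 2 * (n : ℝ) ^ 2 * ∑ q : ZMod m × ZMod n, (dY q) ^ 2 := by
          refine add_le_add ?_ hTm
          exact mul_le_mul_of_nonneg_left step3 (by positivity)
      _ = _ := by ring
  -- rewrite differences via Dx, Dy
  have hdx : ∀ q : ZMod m × ZMod n, (dX q) ^ 2 = h ^ 2 * (Dx h φ q) ^ 2 := by
    intro q; rw [hdXdef]; simp only [Dx]; field_simp
  have hdy : ∀ q : ZMod m × ZMod n, (dY q) ^ 2 = h ^ 2 * (Dy h φ q) ^ 2 := by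
    intro q; rw [hdYdef]; simp only [Dy]; field_simp
  have sumdx : ∑ q : ZMod m × ZMod n, (dX q) ^ 2
      = h ^ 2 * ∑ q : ZMod m × ZMod n, (Dx h φ q) ^ 2 := by
    rw [Finset.mul_sum]; exact Finset.sum_congr rfl fun q _ => hdx q
  have sumdy : ∑ q : ZMod m × ZMod n, (dY q) ^ 2
      = h ^ 2 * ∑ q : ZMod m × ZMod n, (Dy h φ q) ^ 2 := by
    rw [Finset.mul_sum]; exact Finset.sum_congr rfl fun q _ => hdy q
  -- final inequality on squares
  have hDx0 : 0 ≤ ∑ q : ZMod m × ZMod n, (Dx h φ q) ^ 2 :=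
    Finset.sum_nonneg fun q _ => sq_nonneg _
  have hDy0 : 0 ≤ ∑ q : ZMod m × ZMod n, (Dy h φ q) ^ 2 :=
    Finset.sum_nonneg fun q _ => sq_nonneg _
  have hsplit : ∑ p : ZMod m × ZMod n, (Dx h φ p ^ 2 + Dy h φ p ^ 2)
      = (∑ q : ZMod m × ZMod n, (Dx h φ q) ^ 2) + ∑ q : ZMod m × ZMod n, (Dy h φ q) ^ 2 :=
    Finset.sum_add_distrib
  have hLx2 : (m : ℝ) ^ 2 * h ^ 2 = Lx ^ 2 := by rw [← hmx]; ring
  have hLy2 : (n : ℝ) ^ 2 * h ^ 2 = Ly ^ 2 := by rw [← hny]; ring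
  have final : h ^ 2 * ∑ p : ZMod m × ZMod n, (φ p - μ) ^ 2 ≤
      (2 * (Lx ^ 2 + Ly ^ 2)) *
        (h ^ 2 * ∑ p : ZMod m × ZMod n, (Dx h φ p ^ 2 + Dy h φ p ^ 2)) := by
    have h1 : h ^ 2 * ∑ p : ZMod m × ZMod n, (φ p - μ) ^ 2 ≤
        h ^ 2 * (2 * (m : ℝ) ^ 2 * ∑ q : ZMod m × ZMod n, (dX q) ^ 2
          + 2 * (n : ℝ) ^ 2 * ∑ q : ZMod m × ZMod n, (dY q) ^ 2) :=
      mul_le_mul_of_nonneg_left Ssum (by positivity)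
    refine h1.trans ?_
    rw [sumdx, sumdy, hsplit]
    have e : h ^ 2 * (2 * (m : ℝ) ^ 2 * (h ^ 2 * ∑ q : ZMod m × ZMod n, (Dx h φ q) ^ 2)
          + 2 * (n : ℝ) ^ 2 * (h ^ 2 * ∑ q : ZMod m × ZMod n, (Dy h φ q) ^ 2))
        = h ^ 2 * (2 * Lx ^ 2 * ∑ q : ZMod m × ZMod n, (Dx h φ q) ^ 2
          + 2 * Ly ^ 2 * ∑ q : ZMod m × ZMod n, (Dy h φ q) ^ 2) := by
      rw [← hLx2, ← hLy2]; ring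
    rw [e]
    have hh2 : 0 ≤ h ^ 2 := sq_nonneg h
    have : 2 * Lx ^ 2 * ∑ q : ZMod m × ZMod n, (Dx h φ q) ^ 2
          + 2 * Ly ^ 2 * ∑ q : ZMod m × ZMod n, (Dy h φ q) ^ 2
        ≤ 2 * (Lx ^ 2 + Ly ^ 2) *
          ((∑ q : ZMod m × ZMod n, (Dx h φ q) ^ 2) + ∑ q : ZMod m × ZMod n, (Dy h φ q) ^ 2) := by
      nlinarith [sq_nonneg Lx, sq_nonneg Ly]
    nlinarith [this, hh2, mul_le_mul_of_nonneg_left this hh2]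
  -- conclude via square roots
  simp only [norm2, gradNorm2]
  calc Real.sqrt (h ^ 2 * ∑ p : ZMod m × ZMod n, (φ p - μ) ^ 2)
      ≤ Real.sqrt ((2 * (Lx ^ 2 + Ly ^ 2)) *
          (h ^ 2 * ∑ p : ZMod m × ZMod n, (Dx h φ p ^ 2 + Dy h φ p ^ 2))) :=
        Real.sqrt_le_sqrt final
    _ = Real.sqrt (2 * (Lx ^ 2 + Ly ^ 2)) *
          Real.sqrt (h ^ 2 * ∑ p : ZMod m × ZMod n, (Dx h φ p ^ 2 + Dy h φ p ^ 2)) :=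
        Real.sqrt_mul (by positivity) _
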